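/- If φ − α is bijective with linear inverse ψ, then for every w ∈ W and every j ∈ ℕ one has φ_∞( Σ_{i=1}^{j+1} ψ^i(w) ⊗ e_{j−i+1} ) = w ⊗ e_j. In particular φ_∞ is surjective whenever φ − α is bijective. -/

import Mathlib

/-!
With `W_∞ = ℕ →₀ W` and `Φ = φ_∞` as before: if `φ − α` is bijective with linear inverse
`ψ`, then for all `w` and `j`, `φ_∞( Σ_{i=1}^{j+1} ψ^i(w) ⊗ e_{j−i+1} ) = w ⊗ e_j`;
in particular `φ_∞` is surjective.
-/
theorem phi_infty_surjective_of_invertible {W : Type*} [AddCommGroup W] [Module ℂ W]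
    (φ : Module.End ℂ W) (α : ℂ)
    (Φ : (ℕ →₀ W) →ₗ[ℂ] (ℕ →₀ W))
    (hΦ : ∀ (k : ℕ) (w : W),
      Φ (Finsupp.single k w) =
        Finsupp.single k ((φ - α • 1) w) -
          (if k = 0 then 0 else Finsupp.single (k - 1) w))
    (ψ : Module.End ℂ W)
    (hψ₁ : ψ * (φ - α • 1) = 1) (hψ₂ : (φ - α • 1) * ψ = 1) :
    (∀ (w : W) (j : ℕ),
      Φ (∑ i ∈ Finset.Icc 1 (j + 1), Finsupp.single (j + 1 - i) ((ψ ^ i) w)) =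
        Finsupp.single j w) ∧
    Function.Surjective Φ := by
  have hinv : ∀ w : W, (φ - α • 1) (ψ w) = w := by
    intro w
    have := congrArg (fun f : Module.End ℂ W => f w) hψ₂
    simpa using this
  -- rewrite the Icc sum as a range sum
  have hsum : ∀ (w : W) (j : ℕ),
      (∑ i ∈ Finset.Icc 1 (j + 1), Finsupp.single (j + 1 - i) ((ψ ^ i) w)) =
      ∑ m ∈ Finset.range (j + 1), Finsupp.single (j - m) ((ψ ^ (m + 1)) w) := by
    intro w j
    refine Finset.sum_nbij' (fun i => i - 1) (fun m => m + 1) ?_ ?_ ?_ ?_ ?_ <;>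
      simp only [Finset.mem_Icc, Finset.mem_range] <;> intro a ha
    · omega
    · omega
    · omega
    · omega
    · have : a - 1 + 1 = a := by omega
      rw [this]
      congr 1
      omega
  have key : ∀ (w : W) (j : ℕ),
      Φ (∑ m ∈ Finset.range (j + 1), Finsupp.single (j - m) ((ψ ^ (m + 1)) w)) =
        Finsupp.single j w := by
    intro w j
    induction j generalizing w with
    | zero =>
      rw [Finset.sum_range_one, hΦ]
      simp [hinv]
    | succ j ih =>
      have hsplit :
          (∑ m ∈ Finset.range (j + 2), Finsupp.single (j + 1 - m) ((ψ ^ (m + 1)) w)) =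
          (∑ m ∈ Finset.range (j + 1), Finsupp.single (j - m) ((ψ ^ (m + 1)) (ψ w))) +
            Finsupp.single (j + 1) (ψ w) := by
        rw [Finset.sum_range_succ' (fun m => Finsupp.single (j + 1 - m) ((ψ ^ (m + 1)) w))]
        simp only [pow_one, Nat.sub_zero]
        congr 1
        apply Finset.sum_congr rfl
        intro m _
        have h1 : j + 1 - (m + 1) = j - m := by omega
        rw [h1, pow_succ]
        rfl
      have hne : (j + 1 : ℕ) ≠ 0 := by omega
      rw [hsplit, map_add, ih (ψ w), hΦ, if_neg hne, hinv]
      simp only [Nat.add_sub_cancel]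
      abel
  constructor
  · intro w j
    rw [hsum w j, key w j]
  · intro f
    induction f using Finsupp.induction with
    | zero => exact ⟨0, map_zero Φ⟩
    | single_add k w f _ _ ih =>
      obtain ⟨g, hg⟩ := ih
      exact ⟨(∑ m ∈ Finset.range (k + 1), Finsupp.single (k - m) ((ψ ^ (m + 1)) w)) + g,
        by rw [map_add, key w k, hg]⟩
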